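/- If a real number x has a continued fraction expansion [0; a₁, a₂, …] whose sequence of partial quotients (a_n) is eventually periodic but not eventually constant-free in the sense of being a genuine infinite expansion, then x is a quadratic irrational; conversely, an irrational x ∈ (0,1) whose continued fraction expansion is not eventually periodic is not a quadratic irrational. -/

import Mathlib

open Filter

/-- Value of the finite continued fraction `[a₀; a₁, …, a_k]` given as a list. -/
noncomputable def cfValR : List ℕ → ℝ
  | [] => 0
  | [a] => a
  | a :: b :: l => a + 1 / cfValR (b :: l)

/-- The `n`-th convergent `[0; a 0, a 1, …, a (n-1)]` of the infinite continued
fraction with partial quotients `a`. -/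
noncomputable def cfConv (a : ℕ → ℕ) (n : ℕ) : ℝ :=
  cfValR (0 :: List.ofFn fun i : Fin n => a i)

/-- `x` has infinite continued fraction expansion `[0; a 0, a 1, …]`. -/
def HasCF (x : ℝ) (a : ℕ → ℕ) : Prop :=
  Filter.Tendsto (cfConv a) Filter.atTop (nhds x)

/-- A quadratic irrational: an irrational real root of a quadratic with integer
coefficients. -/
def QuadIrrational (x : ℝ) : Prop :=
  Irrational x ∧ ∃ A B C : ℤ, A ≠ 0 ∧ (A : ℝ) * x ^ 2 + B * x + C = 0

lemma cfValR_zero_cons (l : List ℕ) (hl : l ≠ []) : cfValR (0 :: l) = 1 / cfValR l := by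
  cases l with
  | nil => simp at hl
  | cons b t => simp [cfValR]

lemma cfValR_cons (a : ℕ) (l : List ℕ) (hl : l ≠ []) :
    cfValR (a :: l) = a + 1 / cfValR l := by
  cases l with
  | nil => simp at hl
  | cons b t => rfl

lemma one_le_cfValR (l : List ℕ) (h : ∀ x ∈ l, 1 ≤ x) (hne : l ≠ []) : 1 ≤ cfValR l := by
  induction l with
  | nil => simp at hne
  | cons a t ih =>
    cases t with
    | nil =>
      have : (1:ℝ) ≤ a := by exact_mod_cast h a (by simp)
      simpa [cfValR] using this
    | cons b t' =>
      have h1 : 1 ≤ cfValR (b :: t') :=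
        ih (fun x hx => h x (List.mem_cons_of_mem _ hx)) (by simp)
      have h2 : (0:ℝ) < cfValR (b :: t') := lt_of_lt_of_le one_pos h1
      have ha : (1:ℝ) ≤ a := by exact_mod_cast h a (by simp)
      have h3 : 0 ≤ 1 / cfValR (b :: t') := by positivity
      show (1:ℝ) ≤ a + 1 / cfValR (b :: t')
      linarith

lemma cfConv_succ (b : ℕ → ℕ) (m : ℕ) :
    cfConv b (m + 1) = 1 / ((b 0 : ℝ) + cfConv (fun k => b (k + 1)) m) := by
  cases m with
  | zero => simp [cfConv, cfValR]
  | succ m =>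
    have h1 : (List.ofFn fun i : Fin (m + 2) => b i)
        = b 0 :: List.ofFn fun i : Fin (m + 1) => b (i + 1) := by
      rw [List.ofFn_succ]; simp
    have hne : (List.ofFn fun i : Fin (m + 1) => b (i + 1)) ≠ [] := by
      simp [List.ofFn_eq_nil_iff]
    unfold cfConv
    rw [h1, cfValR_zero_cons _ (by simp), cfValR_cons _ _ hne,
      cfValR_zero_cons _ hne]

lemma cfConv_bounds (b : ℕ → ℕ) (hb : ∀ n, 1 ≤ b n) (m : ℕ) :
    0 ≤ cfConv b m ∧ cfConv b m ≤ 1 := by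
  cases m with
  | zero => norm_num [cfConv, cfValR]
  | succ m =>
    have hne : (List.ofFn fun i : Fin (m + 1) => b i) ≠ [] := by
      simp [List.ofFn_eq_nil_iff]
    have h1 : 1 ≤ cfValR (List.ofFn fun i : Fin (m + 1) => b i) := by
      apply one_le_cfValR _ _ hne
      intro x hx
      rw [List.mem_ofFn] at hx
      obtain ⟨i, rfl⟩ := hx
      exact hb i
    have h2 : (0:ℝ) < cfValR (List.ofFn fun i : Fin (m + 1) => b i) := by linarith
    rw [cfConv, cfValR_zero_cons _ hne]
    constructor
    · positivity
    · rw [div_le_one h2]; linarith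

lemma cf_step (w : ℝ) (b : ℕ → ℕ) (hb : ∀ n, 1 ≤ b n) (hw : Irrational w)
    (hcf : HasCF w b) :
    0 < w ∧ w < 1 ∧ (b 0 : ℝ) < 1 / w ∧ 1 / w < (b 0 : ℝ) + 1 ∧
      HasCF (1 / w - (b 0 : ℝ)) fun k => b (k + 1) := by
  have hb0 : (1:ℝ) ≤ (b 0 : ℝ) := by exact_mod_cast hb 0
  have hlo : ∀ m, 1 / ((b 0 : ℝ) + 1) ≤ cfConv b (m + 1) := by
    intro m
    rw [cfConv_succ]
    have h1 := cfConv_bounds (fun k => b (k + 1)) (fun n => hb _) m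
    apply one_div_le_one_div_of_le (by linarith) (by linarith)
  have hhi : ∀ m, cfConv b (m + 1) ≤ 1 / (b 0 : ℝ) := by
    intro m
    rw [cfConv_succ]
    have h1 := cfConv_bounds (fun k => b (k + 1)) (fun n => hb _) m
    apply one_div_le_one_div_of_le (by linarith) (by linarith)
  have h1 : Tendsto (fun m => cfConv b (m + 1)) atTop (nhds w) :=
    hcf.comp (tendsto_add_atTop_nat 1)
  have hwlo : 1 / ((b 0 : ℝ) + 1) ≤ w :=
    le_of_tendsto_of_tendsto tendsto_const_nhds h1 (Eventually.of_forall hlo)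
  have hwhi : w ≤ 1 / (b 0 : ℝ) :=
    le_of_tendsto_of_tendsto h1 tendsto_const_nhds (Eventually.of_forall hhi)
  have hne1 : w ≠ 1 / ((b 0 : ℝ) + 1) := by
    intro h
    apply Rat.not_irrational (1 / ((b 0 : ℚ) + 1))
    rwa [show ((1 / ((b 0 : ℚ) + 1) : ℚ) : ℝ) = 1 / ((b 0 : ℝ) + 1) by push_cast; ring, ← h]
  have hne2 : w ≠ 1 / (b 0 : ℝ) := by
    intro h
    apply Rat.not_irrational (1 / (b 0 : ℚ))
    rwa [show ((1 / (b 0 : ℚ) : ℚ) : ℝ) = 1 / (b 0 : ℝ) by push_cast; ring, ← h]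
  have hwlo' : 1 / ((b 0 : ℝ) + 1) < w := lt_of_le_of_ne hwlo (Ne.symm hne1)
  have hwhi' : w < 1 / (b 0 : ℝ) := lt_of_le_of_ne hwhi hne2
  have hw0 : 0 < w := lt_trans (by positivity) hwlo'
  have hw1 : w < 1 := lt_of_lt_of_le hwhi' (by rw [div_le_one (by linarith)]; linarith)
  have hinv : w * (1 / w) = 1 := by field_simp
  have hf1 : (b 0 : ℝ) < 1 / w := by
    have : w * (b 0 : ℝ) < 1 := by
      have := mul_lt_mul_of_pos_right hwhi' (by linarith : (0:ℝ) < (b 0 : ℝ))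
      rwa [one_div_mul_eq_div, div_self (by linarith)] at this
    nlinarith
  have hf2 : 1 / w < (b 0 : ℝ) + 1 := by
    have : 1 < w * ((b 0 : ℝ) + 1) := by
      have := mul_lt_mul_of_pos_right hwlo' (by linarith : (0:ℝ) < (b 0 : ℝ) + 1)
      rwa [one_div_mul_eq_div, div_self (by linarith)] at this
    nlinarith
  refine ⟨hw0, hw1, hf1, hf2, ?_⟩
  have hkey : ∀ m, cfConv (fun k => b (k + 1)) m = 1 / cfConv b (m + 1) - (b 0 : ℝ) := by
    intro m
    have h2 := cfConv_succ b m
    have h3 := cfConv_bounds (fun k => b (k + 1)) (fun n => hb _) m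
    rw [h2, one_div_one_div]
    ring
  have h4 : Tendsto (fun m => 1 / cfConv b (m + 1) - (b 0 : ℝ)) atTop
      (nhds (1 / w - (b 0 : ℝ))) := by
    apply Tendsto.sub_const
    simpa [one_div] using (h1.inv₀ (ne_of_gt hw0))
  unfold HasCF
  convert h4 using 2 with m
  exact hkey m

noncomputable def cfTails (x : ℝ) (a : ℕ → ℕ) : ℕ → ℝ
  | 0 => x
  | n + 1 => 1 / cfTails x a n - a n

lemma tails_spec (x : ℝ) (hirr : Irrational x) (a : ℕ → ℕ) (ha : ∀ n, 1 ≤ a n)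
    (hcf : HasCF x a) :
    ∀ n, Irrational (cfTails x a n) ∧ HasCF (cfTails x a n) (fun k => a (n + k)) := by
  intro n
  induction n with
  | zero => exact ⟨hirr, by simpa [cfTails] using hcf⟩
  | succ n ih =>
    obtain ⟨hi, hc⟩ := ih
    obtain ⟨h0, h1, h2, h3, h4⟩ := cf_step _ _ (fun k => ha _) hi hc
    refine ⟨?_, ?_⟩
    · show Irrational (1 / cfTails x a n - (a n : ℝ))
      simpa [one_div] using (hi.inv).sub_natCast (a n)
    · show HasCF (1 / cfTails x a n - (a n : ℝ)) (fun k => a (n + 1 + k))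
      have he : (fun k => a (n + 1 + k)) = fun k => a (n + k + 1) := by
        funext k; congr 1; omega
      rw [he]; exact h4

lemma tails_bounds (x : ℝ) (hirr : Irrational x) (a : ℕ → ℕ) (ha : ∀ n, 1 ≤ a n)
    (hcf : HasCF x a) (n : ℕ) :
    0 < cfTails x a n ∧ cfTails x a n < 1 ∧
      (a n : ℝ) < 1 / cfTails x a n ∧ 1 / cfTails x a n < (a n : ℝ) + 1 := by
  obtain ⟨hi, hc⟩ := tails_spec x hirr a ha hcf n
  obtain ⟨h0, h1, h2, h3, _⟩ := cf_step _ _ (fun k => ha _) hi hc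
  exact ⟨h0, h1, by simpa using h2, by simpa using h3⟩

/-- tails determine the partial quotient -/
lemma quotient_eq (x : ℝ) (hirr : Irrational x) (a : ℕ → ℕ) (ha : ∀ n, 1 ≤ a n)
    (hcf : HasCF x a) {n m : ℕ} (h : cfTails x a n = cfTails x a m) : a n = a m := by
  obtain ⟨_, _, h2, h3⟩ := tails_bounds x hirr a ha hcf n
  obtain ⟨_, _, h2', h3'⟩ := tails_bounds x hirr a ha hcf m
  rw [h] at h2 h3
  have e1 : (a n : ℝ) < (a m : ℝ) + 1 := lt_trans h2 h3'
  have e2 : (a m : ℝ) < (a n : ℝ) + 1 := lt_trans h2' h3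
  have e1' : a n < a m + 1 := by exact_mod_cast e1
  have e2' : a m < a n + 1 := by exact_mod_cast e2
  omega

lemma quad_step_aux (v w : ℝ) (a : ℕ) (hv0 : v ≠ 0) (hvirr : Irrational v)
    (hwv : w = v⁻¹ - (a : ℝ)) (A B C : ℤ) (hA : A ≠ 0)
    (heq : (A : ℝ) * w ^ 2 + B * w + C = 0) : QuadIrrational v := by
  rw [hwv] at heq
  have hmain : ((A * a ^ 2 - B * a + C : ℤ) : ℝ) * v ^ 2 + ((B - 2 * A * a : ℤ) : ℝ) * v
      + (A : ℝ) = 0 := by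
    have h2 : v * (((A * a ^ 2 - B * a + C : ℤ) : ℝ) * v ^ 2
        + ((B - 2 * A * a : ℤ) : ℝ) * v + (A : ℝ)) = 0 := by
      push_cast
      field_simp at heq
      linear_combination v * heq
    rcases mul_eq_zero.1 h2 with h | h
    · exact absurd h hv0
    · exact h
  by_cases hA' : (A * (a : ℤ) ^ 2 - B * a + C : ℤ) = 0
  · exfalso
    rw [hA'] at hmain
    have hB' : (B - 2 * A * a : ℤ) ≠ 0 := by
      intro h
      rw [h] at hmain
      simp at hmain
      exact hA (by exact_mod_cast hmain)
    have hB'' : ((B : ℝ) - 2 * A * a) ≠ 0 := by exact_mod_cast hB'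
    have hveq : v = ((-A : ℤ) : ℝ) / ((B - 2 * A * a : ℤ) : ℝ) := by
      push_cast at hmain ⊢
      rw [eq_div_iff hB'']
      linear_combination hmain
    apply Rat.not_irrational ((-A : ℚ) / ((B : ℚ) - 2 * A * a))
    rw [show (((-A : ℚ) / ((B : ℚ) - 2 * A * a) : ℚ) : ℝ)
        = ((-A : ℤ) : ℝ) / ((B - 2 * A * a : ℤ) : ℝ) by push_cast; ring, ← hveq]
    exact hvirr
  · exact ⟨hvirr, _, _, _, hA', hmain⟩

lemma quad_step (w : ℝ) (a : ℕ) (hq : QuadIrrational w) :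
    QuadIrrational (((a : ℝ) + w)⁻¹) := by
  obtain ⟨hw, A, B, C, hA, heq⟩ := hq
  have hiv : Irrational ((a : ℝ) + w) := hw.natCast_add a
  have hne : (a : ℝ) + w ≠ 0 := hiv.ne_zero
  exact quad_step_aux _ w a (inv_ne_zero hne) hiv.inv (by rw [inv_inv]; ring) A B C hA heq

lemma tails_inv (x : ℝ) (hirr : Irrational x) (a : ℕ → ℕ) (ha : ∀ n, 1 ≤ a n)
    (hcf : HasCF x a) (n : ℕ) :
    cfTails x a n = ((a n : ℝ) + cfTails x a (n + 1))⁻¹ := by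
  have h0 := (tails_bounds x hirr a ha hcf n).1
  have hrec : cfTails x a (n + 1) = 1 / cfTails x a n - a n := rfl
  rw [hrec, show (a n : ℝ) + (1 / cfTails x a n - (a n : ℝ)) = 1 / cfTails x a n by ring,
    one_div, inv_inv]

lemma euler_dir (x : ℝ) (hirr : Irrational x) (a : ℕ → ℕ) (ha : ∀ n, 1 ≤ a n)
    (hcf : HasCF x a) (c p : ℕ) (hp : 0 < p) (hper : ∀ n, c ≤ n → a (n + p) = a n) :
    QuadIrrational x := by
  set y := cfTails x a with hy
  -- periodic tail value
  have hyeq : y (c + p) = y c := by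
    have h1 := (tails_spec x hirr a ha hcf c).2
    have h2 := (tails_spec x hirr a ha hcf (c + p)).2
    have he : (fun k => a (c + p + k)) = fun k => a (c + k) := by
      funext k
      have := hper (c + k) (Nat.le_add_right c k)
      calc a (c + p + k) = a (c + k + p) := by congr 1; omega
        _ = a (c + k) := this
    rw [he] at h2
    exact tendsto_nhds_unique h2 h1
  -- Möbius representation of y c in terms of y (c + j)
  have mob : ∀ j, ∃ α β γ δ : ℕ, 1 ≤ δ ∧ (1 ≤ j → 1 ≤ γ) ∧
      y c = ((α : ℝ) * y (c + j) + β) / ((γ : ℝ) * y (c + j) + δ) := by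
    intro j
    induction j with
    | zero => exact ⟨1, 0, 0, 1, le_refl 1, by omega, by simp⟩
    | succ j ih =>
      obtain ⟨α, β, γ, δ, hδ, hγ, heq⟩ := ih
      set A := a (c + j) with hA
      set v := y (c + (j + 1)) with hv
      have hv0 : 0 < v := by
        rw [hv, show c + (j + 1) = c + j + 1 from by omega]
        exact (tails_bounds x hirr a ha hcf (c + j + 1)).1
      have hA1 : 1 ≤ A := ha _
      have hrec : y (c + j) = ((A : ℝ) + v)⁻¹ := by
        have := tails_inv x hirr a ha hcf (c + j)
        rw [hv, show c + (j + 1) = c + j + 1 from by omega]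
        exact this
      refine ⟨β, α + A * β, δ, γ + A * δ, ?_, fun _ => hδ, ?_⟩
      · calc 1 ≤ δ := hδ
          _ ≤ A * δ := Nat.le_mul_of_pos_left δ hA1
          _ ≤ γ + A * δ := Nat.le_add_left _ _
      · rw [heq, hrec]
        have hav : (0:ℝ) < (A : ℝ) + v := by positivity
        have hden : (0:ℝ) < (δ : ℝ) * v + ((γ : ℝ) + (A : ℝ) * δ) := by
          have h1 : (1:ℝ) ≤ (A : ℝ) * δ := by
            have : (1:ℕ) ≤ A * δ := le_trans hδ (Nat.le_mul_of_pos_left δ hA1)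
            exact_mod_cast this
          have h2 : (0:ℝ) ≤ (δ : ℝ) * v := by positivity
          have h3 : (0:ℝ) ≤ (γ : ℝ) := by positivity
          linarith
        have hden2 : (0:ℝ) < (γ : ℝ) * ((A : ℝ) + v)⁻¹ + δ := by
          have h1 : (0:ℝ) ≤ (γ : ℝ) * ((A : ℝ) + v)⁻¹ := by positivity
          have hδ' : (1:ℝ) ≤ (δ : ℝ) := by exact_mod_cast hδ
          linarith
        push_cast
        rw [div_eq_div_iff hden2.ne' hden.ne']
        field_simp
        ring
  -- quadratic equation for w := y c
  obtain ⟨α, β, γ, δ, hδ, hγ, heq⟩ := mob p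
  rw [hyeq] at heq
  set w := y c with hw
  have hw0 : 0 < w := (tails_bounds x hirr a ha hcf c).1
  have hwirr : Irrational w := (tails_spec x hirr a ha hcf c).1
  have hγ1 : 1 ≤ γ := hγ hp
  have hden : (0:ℝ) < (γ : ℝ) * w + δ := by
    have h1 : (0:ℝ) ≤ (γ : ℝ) * w := by positivity
    have h2 : (1:ℝ) ≤ (δ : ℝ) := by exact_mod_cast hδ
    linarith
  have hquad : (γ : ℝ) * w ^ 2 + ((δ : ℝ) - (α : ℝ)) * w - (β : ℝ) = 0 := by
    have h1 : w * ((γ : ℝ) * w + δ) = (α : ℝ) * w + β := (eq_div_iff hden.ne').mp heq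
    nlinarith [h1]
  have hγ0 : (γ : ℤ) ≠ 0 := by exact_mod_cast Nat.one_le_iff_ne_zero.mp hγ1
  have hqc : QuadIrrational w :=
    ⟨hwirr, γ, (δ : ℤ) - α, -(β : ℤ), hγ0, by push_cast; linarith [hquad]⟩
  -- descend from y c to x
  have descend : ∀ j, QuadIrrational (y j) → QuadIrrational x := by
    intro j
    induction j with
    | zero => exact fun h => h
    | succ j ih =>
      intro h
      apply ih
      rw [show y j = ((a j : ℝ) + y (j + 1))⁻¹ from tails_inv x hirr a ha hcf j]
      exact quad_step _ _ h
  exact descend c hqc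

def cfCoeffs (A B C : ℤ) (a : ℕ → ℕ) : ℕ → ℤ × ℤ × ℤ
  | 0 => (A, B, C)
  | n + 1 =>
    ((cfCoeffs A B C a n).2.2,
     (cfCoeffs A B C a n).2.1 + 2 * (a n : ℤ) * (cfCoeffs A B C a n).2.2,
     (cfCoeffs A B C a n).1 + (a n : ℤ) * (cfCoeffs A B C a n).2.1
       + (a n : ℤ) ^ 2 * (cfCoeffs A B C a n).2.2)

set_option maxHeartbeats 2000000 in
lemma lagrange_dir (x : ℝ) (hirr : Irrational x) (a : ℕ → ℕ) (ha : ∀ n, 1 ≤ a n)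
    (hcf : HasCF x a) (hq : QuadIrrational x) :
    ∃ c p : ℕ, 0 < p ∧ ∀ n, c ≤ n → a (n + p) = a n := by
  obtain ⟨-, A, B, C, hA, heq⟩ := hq
  set y := cfTails x a with hy
  have yirr : ∀ n, Irrational (y n) := fun n => (tails_spec x hirr a ha hcf n).1
  have ypos : ∀ n, 0 < y n := fun n => (tails_bounds x hirr a ha hcf n).1
  have ylt1 : ∀ n, y n < 1 := fun n => (tails_bounds x hirr a ha hcf n).2.1
  have yne : ∀ n, y n ≠ 0 := fun n => ne_of_gt (ypos n)
  have yrec : ∀ n, y (n + 1) = 1 / y n - a n := fun n => rfl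
  have ynrat : ∀ n (q : ℚ), y n ≠ (q : ℝ) := fun n q h => Rat.not_irrational q (h ▸ yirr n)
  set F := cfCoeffs A B C a with hF
  have F0 : F 0 = (A, B, C) := rfl
  have Frec1 : ∀ n, (F (n + 1)).1 = (F n).2.2 := fun n => rfl
  have Frec2 : ∀ n, (F (n + 1)).2.1 = (F n).2.1 + 2 * (a n : ℤ) * (F n).2.2 := fun n => rfl
  have Frec3 : ∀ n, (F (n + 1)).2.2
      = (F n).1 + (a n : ℤ) * (F n).2.1 + (a n : ℤ) ^ 2 * (F n).2.2 := fun n => rfl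
  clear_value F
  -- the invariant
  have spec : ∀ n, (F n).1 ≠ 0 ∧
      ((F n).1 : ℝ) * (y n) ^ 2 + ((F n).2.1 : ℝ) * y n + ((F n).2.2 : ℝ) = 0 := by
    intro n
    induction n with
    | zero => rw [F0]; exact ⟨hA, heq⟩
    | succ n ih =>
      obtain ⟨hAn, hroot⟩ := ih
      have hAnR : ((F n).1 : ℝ) ≠ 0 := by exact_mod_cast hAn
      have hCn : (F n).2.2 ≠ 0 := by
        intro hC0
        rw [hC0] at hroot
        push_cast at hroot
        have h1 : y n * (((F n).1 : ℝ) * y n + ((F n).2.1 : ℝ)) = 0 := by linarith [hroot]; 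
        have h2 : ((F n).1 : ℝ) * y n + ((F n).2.1 : ℝ) = 0 :=
          (mul_eq_zero.mp h1).resolve_left (yne n)
        apply ynrat n (-(((F n).2.1 : ℚ)) / ((F n).1 : ℚ))
        push_cast
        rw [eq_div_iff hAnR]
        linarith [h2]
      constructor
      · rw [Frec1]; exact hCn
      · rw [Frec1, Frec2, Frec3, yrec n]
        push_cast
        field_simp [yne n]
        linear_combination hroot
  have Ane : ∀ n, ((F n).1 : ℝ) ≠ 0 := fun n => by exact_mod_cast (spec n).1
  have hroot : ∀ n, ((F n).1 : ℝ) * (y n) ^ 2 + ((F n).2.1 : ℝ) * y n + ((F n).2.2 : ℝ) = 0 :=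
    fun n => (spec n).2
  have Cne : ∀ n, ((F n).2.2 : ℝ) ≠ 0 := fun n => by
    have := (spec (n + 1)).1; rw [Frec1] at this; exact_mod_cast this
  -- the conjugate roots
  set z : ℕ → ℝ := fun n => -((F n).2.1 : ℝ) / ((F n).1 : ℝ) - y n with hz
  have zdef : ∀ n, z n = -((F n).2.1 : ℝ) / ((F n).1 : ℝ) - y n := fun n => by rw [hz]
  clear_value z
  have zirr : ∀ n, Irrational (z n) := by
    intro n
    have h1 : ((-(((F n).2.1 : ℚ)) / ((F n).1 : ℚ) : ℚ) : ℝ)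
        = -((F n).2.1 : ℝ) / ((F n).1 : ℝ) := by push_cast; ring
    have := (yirr n).ratCast_sub (-(((F n).2.1 : ℚ)) / ((F n).1 : ℚ))
    rw [h1] at this
    rw [zdef n]
    exact this
  have zne : ∀ n, z n ≠ 0 := fun n => (zirr n).ne_zero
  have zyne : ∀ n, z n ≠ y n := by
    intro n h
    apply ynrat n (-(((F n).2.1 : ℚ)) / (2 * ((F n).1 : ℚ)))
    have h5 : -((F n).2.1 : ℝ) / ((F n).1 : ℝ) - y n = y n := by rw [← zdef n]; exact h
    have h6 : -((F n).2.1 : ℝ) / ((F n).1 : ℝ) = 2 * y n := by linarith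
    rw [div_eq_iff (Ane n)] at h6
    have h2A : (2 : ℝ) * ((F n).1 : ℝ) ≠ 0 := by
      have := Ane n; intro hc; apply this; linarith [hc]
    push_cast
    rw [eq_div_iff h2A]
    linarith [h6]
  have zroot : ∀ n, ((F n).1 : ℝ) * (z n) ^ 2 + ((F n).2.1 : ℝ) * z n + ((F n).2.2 : ℝ) = 0 := by
    intro n
    rw [zdef n]
    field_simp [Ane n]
    linear_combination ((F n).1 : ℝ) * hroot n
  have zrec : ∀ n, z (n + 1) = 1 / z n - a n := by
    intro n
    have h3 : z n * (((F n).1 : ℝ) * y n) = ((F n).2.2 : ℝ) := by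
      rw [zdef n]
      field_simp [Ane n]
      linear_combination -hroot n
    have h4 : 1 / z n = ((F n).1 : ℝ) * y n / ((F n).2.2 : ℝ) := by
      rw [div_eq_div_iff (zne n) (Cne n), one_mul, ← h3]
      ring
    rw [zdef (n + 1), h4, Frec1, Frec2, yrec n]
    push_cast
    field_simp [Cne n, yne n]
    linear_combination -hroot n
  -- invariant discriminant
  set D := B ^ 2 - 4 * A * C with hD
  have disc : ∀ n, (F n).2.1 ^ 2 - 4 * (F n).1 * (F n).2.2 = D := by
    intro n
    induction n with
    | zero => rw [F0]
    | succ n ih => rw [Frec1, Frec2, Frec3]; ring_nf; ring_nf at ih; linarith [ih]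
  clear_value D
  have dsq : ∀ n, (y n - z n) ^ 2 * ((F n).1 : ℝ) ^ 2 = (D : ℝ) := by
    intro n
    have h5 : (y n - z n) * ((F n).1 : ℝ) = 2 * ((F n).1 : ℝ) * y n + ((F n).2.1 : ℝ) := by
      rw [zdef n]
      field_simp [Ane n]
      ring
    have hdiscR : (((F n).2.1 : ℝ)) ^ 2 - 4 * ((F n).1 : ℝ) * ((F n).2.2 : ℝ) = (D : ℝ) := by
      exact_mod_cast congrArg (fun t : ℤ => (t : ℝ)) (disc n)
    linear_combination ((y n - z n) * ((F n).1 : ℝ) + 2 * ((F n).1 : ℝ) * y n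
      + ((F n).2.1 : ℝ)) * h5 + 4 * ((F n).1 : ℝ) * hroot n + hdiscR
  have Dpos : 0 < D := by
    have h1 : (0 : ℝ) < (D : ℝ) := by
      rw [← dsq 0]
      have h2 : y 0 - z 0 ≠ 0 := sub_ne_zero.mpr (Ne.symm (zyne 0))
      have h3 := Ane 0
      positivity
    exact_mod_cast h1
  -- eventually the conjugate is negative
  have hzneg : ∃ N, z N < 0 := by
    by_contra hcon
    push_neg at hcon
    have zpos : ∀ n, 0 < z n := fun n => lt_of_le_of_ne (hcon n) (Ne.symm (zne n))
    have haR : ∀ n, (1 : ℝ) ≤ (a n : ℝ) := fun n => by exact_mod_cast ha n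
    have zrel : ∀ n, z n * ((a n : ℝ) + z (n + 1)) = 1 := by
      intro n
      have h1 : z n * ((a n : ℝ) + z (n + 1)) = z n * (1 / z n) := by rw [zrec n]; ring
      rw [mul_one_div_cancel (zne n)] at h1
      exact h1
    have yrel : ∀ n, y n * ((a n : ℝ) + y (n + 1)) = 1 := by
      intro n
      have h1 : y n * ((a n : ℝ) + y (n + 1)) = y n * (1 / y n) := by rw [yrec n]; ring
      rw [mul_one_div_cancel (yne n)] at h1
      exact h1
    have zlt1 : ∀ n, z n < 1 := by
      intro n
      nlinarith [zrel n, zpos n, zpos (n + 1), haR n]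
    have prody : ∀ n, y n * y (n + 1) < 1 / 2 := by
      intro n
      have hkey : (0 : ℝ) < ((a n : ℝ) - y (n + 1)) * y n :=
        mul_pos (by linarith [haR n, ylt1 (n + 1)]) (ypos n)
      nlinarith [yrel n]
    have prodz : ∀ n, z n * z (n + 1) < 1 / 2 := by
      intro n
      have hkey : (0 : ℝ) < ((a n : ℝ) - z (n + 1)) * z n :=
        mul_pos (by linarith [haR n, zlt1 (n + 1)]) (zpos n)
      nlinarith [zrel n, hkey, zpos n, zpos (n + 1), haR n]
    have dne : ∀ n, y n - z n ≠ 0 := fun n => sub_ne_zero.mpr (fun h => zyne n h.symm)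
    have drec : ∀ n, (y (n + 1) - z (n + 1)) * (y n * z n) = -(y n - z n) := by
      intro n
      rw [yrec n, zrec n]
      field_simp [yne n, zne n]
      ring
    have dabs : ∀ n, |y (n + 1) - z (n + 1)| * (y n * z n) = |y n - z n| := by
      intro n
      have h1 := congrArg abs (drec n)
      rwa [abs_mul, abs_neg, abs_of_pos (mul_pos (ypos n) (zpos n))] at h1
    have growth : ∀ n, 4 * |y n - z n| ≤ |y (n + 2) - z (n + 2)| := by
      intro n
      have e1 := dabs n
      have e2 := dabs (n + 1)
      have hp1 : 0 < y n * z n := mul_pos (ypos n) (zpos n)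
      have hp2 : 0 < y (n + 1) * z (n + 1) := mul_pos (ypos (n + 1)) (zpos (n + 1))
      have hq : y n * z n * (y (n + 1) * z (n + 1)) < 1 / 4 := by
        nlinarith [prody n, prodz n, mul_pos (ypos n) (ypos (n + 1)),
          mul_pos (zpos n) (zpos (n + 1))]
      have hd2 : 0 ≤ |y (n + 2) - z (n + 2)| := abs_nonneg _
      nlinarith [e1, e2, hd2, hq, mul_pos hp1 hp2]
    have iter : ∀ k, 4 ^ k * |y 0 - z 0| ≤ |y (2 * k) - z (2 * k)| := by
      intro k
      induction k with
      | zero => simp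
      | succ k ih =>
        have h1 := growth (2 * k)
        have h2 : 2 * (k + 1) = 2 * k + 2 := by ring
        rw [h2]
        have h3 : (4 : ℝ) ^ (k + 1) * |y 0 - z 0| = 4 * (4 ^ k * |y 0 - z 0|) := by ring
        rw [h3]
        linarith
    have dlt1 : ∀ m, |y m - z m| < 1 := by
      intro m
      rw [abs_lt]
      constructor
      · linarith [ypos m, zlt1 m]
      · linarith [ylt1 m, zpos m]
    obtain ⟨k, hk⟩ := pow_unbounded_of_one_lt (1 / |y 0 - z 0|) (show (1 : ℝ) < 4 by norm_num)
    have habs0 : 0 < |y 0 - z 0| := abs_pos.mpr (dne 0)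
    have h1 : 1 < 4 ^ k * |y 0 - z 0| := by
      rw [div_lt_iff₀ habs0] at hk
      linarith
    linarith [iter k, dlt1 (2 * k)]
  obtain ⟨N, hN⟩ := hzneg
  have haR : ∀ n, (1 : ℝ) ≤ (a n : ℝ) := fun n => by exact_mod_cast ha n
  have zneg : ∀ n, N ≤ n → z n < 0 := by
    intro n hn
    refine Nat.le_induction hN ?_ n hn
    intro m hm ih
    rw [zrec m]
    have h1 : 1 / z m < 0 := div_neg_of_pos_of_neg one_pos ih
    linarith [haR m]
  have zltm1 : ∀ n, N < n → z n < -1 := by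
    intro n hn
    obtain ⟨m, rfl⟩ : ∃ m, n = m + 1 := ⟨n - 1, by omega⟩
    rw [zrec m]
    have h1 : 1 / z m < 0 := div_neg_of_pos_of_neg one_pos (zneg m (by omega))
    linarith [haR m]
  -- coefficient bounds
  have intabs : ∀ t : ℤ, t ≠ 0 → |t| ≤ t ^ 2 := by
    intro t ht
    nlinarith [Int.one_le_abs ht, sq_abs t]
  have hA2 : ∀ n, N < n → (F n).1 ^ 2 ≤ D := by
    intro n hn
    have h1 : 1 < y n - z n := by linarith [ypos n, zltm1 n hn]
    have h2 := dsq n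
    have h3 : (0 : ℝ) < ((F n).1 : ℝ) ^ 2 := by
      have h4 := Ane n
      positivity
    have h6 : 1 < (y n - z n) ^ 2 := by nlinarith [h1]
    have h5 : ((F n).1 : ℝ) ^ 2 < (D : ℝ) := by
      nlinarith [mul_pos h3 (by linarith : (0 : ℝ) < (y n - z n) ^ 2 - 1), h2]
    exact_mod_cast le_of_lt h5
  have habsA : ∀ n, N < n → |(F n).1| ≤ D :=
    fun n hn => le_trans (intabs _ (spec n).1) (hA2 n hn)
  have habsC : ∀ n, N < n → |(F n).2.2| ≤ D := by
    intro n hn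
    have h1 := habsA (n + 1) (by omega)
    rwa [Frec1] at h1
  have habsB : ∀ n, N < n → |(F n).2.1| ≤ 3 * D := by
    intro n hn
    by_contra hB
    push_neg at hB
    have hac : (F n).1 * (F n).2.2 ≤ |(F n).1| * |(F n).2.2| := by
      rw [← abs_mul]; exact le_abs_self _
    have h0 : (0 : ℤ) < |(F n).2.1| + 3 * D := by
      have := abs_nonneg ((F n).2.1); nlinarith [Dpos]
    have hmul := mul_pos (sub_pos.mpr hB) h0
    have hAa := habsA n hn
    have hCc := habsC n hn
    have hdn := disc n
    have hD1 : (1 : ℤ) ≤ D := by omega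
    have hDD : D ≤ D ^ 2 := by nlinarith [hD1]
    have h7 : |(F n).1| * |(F n).2.2| ≤ D ^ 2 := by
      have := mul_le_mul hAa hCc (abs_nonneg _) (by linarith [Dpos] : (0 : ℤ) ≤ D)
      nlinarith [this]
    have h9 : (3 * D) ^ 2 < |(F n).2.1| ^ 2 :=
      pow_lt_pow_left₀ hB (by linarith [Dpos]) (by norm_num)
    nlinarith [h9, sq_abs ((F n).2.1), hdn, hac, h7, hDD]
  -- pigeonhole
  have main : ∀ k1 k2 : ℕ, k1 < k2 → F (N + 1 + k1) = F (N + 1 + k2) →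
      ∃ c p : ℕ, 0 < p ∧ ∀ n, c ≤ n → a (n + p) = a n := by
    intro k1 k2 hlt hgeq
    set m := N + 1 + k1 with hm
    set m' := N + 1 + k2 with hm'
    have hFm : F m' = F m := hgeq.symm
    have hmm' : m < m' := by omega
    have hNm : N < m := by omega
    -- y m' is a root of the m-th polynomial, and equals y m
    have yeq : y m' = y m := by
      have expand : ((F m).1 : ℝ) * (y m' - y m) * (y m' - z m)
          = ((F m).1 : ℝ) * (y m') ^ 2 + ((F m).2.1 : ℝ) * (y m') + ((F m).2.2 : ℝ) := by
        rw [zdef m]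
        field_simp [Ane m]
        linear_combination -hroot m
      have key : ((F m).1 : ℝ) * (y m' - y m) * (y m' - z m) = 0 := by
        rw [expand]
        have h1 := hroot m'
        rwa [hFm] at h1
      have hzf : y m' - z m ≠ 0 := by
        have := zltm1 m hNm
        have := ypos m'
        intro h
        have : y m' = z m := by linarith [sub_eq_zero.mp h]
        linarith
      rcases mul_eq_zero.mp key with h | h
      · rcases mul_eq_zero.mp h with h2 | h2
        · exact absurd h2 (Ane m)
        · linarith [sub_eq_zero.mp h2]
      · exact absurd h hzf
    have aeq : ∀ k, y (m + k) = y (m' + k) := by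
      intro k
      induction k with
      | zero => simpa using yeq.symm
      | succ k ih =>
        have hak : a (m + k) = a (m' + k) := quotient_eq x hirr a ha hcf ih
        have e1 : m + (k + 1) = (m + k) + 1 := by omega
        have e2 : m' + (k + 1) = (m' + k) + 1 := by omega
        rw [e1, e2, yrec (m + k), yrec (m' + k), ih, hak]
    refine ⟨m, m' - m, by omega, ?_⟩
    intro n hn
    have hyn : y (m + (n - m)) = y (m' + (n - m)) := aeq (n - m)
    have han : a (m' + (n - m)) = a (m + (n - m)) := quotient_eq x hirr a ha hcf hyn.symm
    calc a (n + (m' - m)) = a (m' + (n - m)) := by congr 1; omega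
      _ = a (m + (n - m)) := han
      _ = a n := by congr 1; omega
  set g : ℕ → ℤ × ℤ × ℤ := fun k => F (N + 1 + k) with hg
  have hrange : ∀ k, g k ∈ Set.Icc ((-(3 * D), -(3 * D), -(3 * D)) : ℤ × ℤ × ℤ)
      (3 * D, 3 * D, 3 * D) := by
    intro k
    have hk : N < N + 1 + k := by omega
    have b1 := abs_le.mp (le_trans (habsA _ hk) (by nlinarith [Dpos] : D ≤ 3 * D))
    have b2 := abs_le.mp (habsB _ hk)
    have b3 := abs_le.mp (le_trans (habsC _ hk) (by nlinarith [Dpos] : D ≤ 3 * D))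
    simp only [Set.mem_Icc, Prod.mk_le_mk, hg]
    exact ⟨⟨b1.1, b2.1, b3.1⟩, ⟨b1.2, b2.2, b3.2⟩⟩
  have hninj : ¬ Function.Injective g := by
    intro hinj
    exact (Set.infinite_range_of_injective hinj)
      ((Set.finite_Icc _ _).subset (Set.range_subset_iff.mpr hrange))
  rw [Function.not_injective_iff] at hninj
  obtain ⟨k1, k2, hgeq, hkne⟩ := hninj
  rcases hkne.lt_or_gt with h | h
  · exact main k1 k2 h hgeq
  · exact main k2 k1 h hgeq.symm


/-- Euler–Lagrange: an irrational `x ∈ (0,1)` is a quadratic irrational if and only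
if its continued fraction expansion is eventually periodic. -/
theorem euler_lagrange (x : ℝ) (hx0 : 0 < x) (hx1 : x < 1) (hirr : Irrational x)
    (a : ℕ → ℕ) (ha : ∀ n, 1 ≤ a n) (hcf : HasCF x a) :
    (∃ c p : ℕ, 0 < p ∧ ∀ n, c ≤ n → a (n + p) = a n) ↔ QuadIrrational x := by
  constructor
  · rintro ⟨c, p, hp, hper⟩
    exact euler_dir x hirr a ha hcf c p hp hper
  · intro hq
    exact lagrange_dir x hirr a ha hcf hq
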